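/- Let B(0), B(1), B(2), … be row-stochastic n×n matrices with B(p)ᵢᵢ ≥ β > 0 for all i, p and satisfying the cut-balance condition Σ_{i∈S,j∉S} B(p)ᵢⱼ ≤ K' Σ_{i∈S,j∉S} B(p)ⱼᵢ for all nonempty proper S. If y(p+1) = B(p) y(p) and y(p) converges to y*, and i, j are two agents with Σ_p B(p)ᵢⱼ = ∞ and Σ_p B(p)ⱼᵢ = ∞ implying y*ᵢ = y*ⱼ (per-component consensus on strongly connected persistent components), then in particular for n = 2: if Σ_p B(p)₁₂ = ∞ then y*₁ = y*₂. -/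

import Mathlib

open Filter

/-- two-agent discrete case: for row-stochastic `2×2` matrices
with diagonal entries at least `β > 0` and cut balance with ratio `K'`, any
trajectory `y(p+1) = B(p) y(p)` has converging components, and if
`Σ_p B(p)₁₂ = ∞` the two limits coincide. -/
theorem two_agent_discrete_consensus
    (β K' : ℝ) (hβ : 0 < β) (hK' : 1 ≤ K')
    (B : ℕ → Matrix (Fin 2) (Fin 2) ℝ)
    (hB_nonneg : ∀ p i j, 0 ≤ B p i j)
    (hB_stoch : ∀ p i, ∑ j, B p i j = 1)
    (hB_diag : ∀ p i, β ≤ B p i i)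
    (hB_cut : ∀ p, B p 0 1 ≤ K' * B p 1 0 ∧ B p 1 0 ≤ K' * B p 0 1)
    (y : ℕ → Fin 2 → ℝ)
    (hdyn : ∀ p, y (p + 1) = (B p).mulVec (y p)) :
    ∃ L₀ L₁ : ℝ,
      Tendsto (fun p => y p 0) atTop (nhds L₀) ∧
      Tendsto (fun p => y p 1) atTop (nhds L₁) ∧
      (¬ Summable (fun p => B p 0 1) → L₀ = L₁) := by
  set ε : ℝ := min 1 (2 * β) with hεdef
  have hε : 0 < ε := lt_min one_pos (by linarith)
  have hε1 : ε ≤ 1 := min_le_left _ _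
  have hε2 : ε ≤ 2 * β := min_le_right _ _
  have hrow : ∀ p i, B p i 0 + B p i 1 = 1 := by
    intro p i; have := hB_stoch p i; rwa [Fin.sum_univ_two] at this
  have hB01le : ∀ p, B p 0 1 ≤ 1 - β := by
    intro p; have h := hrow p 0; have := hB_diag p 0; linarith
  have hB10le : ∀ p, B p 1 0 ≤ 1 - β := by
    intro p; have h := hrow p 1; have := hB_diag p 1; linarith
  set d : ℕ → ℝ := fun p => y p 1 - y p 0 with hd
  have hcomp : ∀ p i, y (p + 1) i = B p i 0 * y p 0 + B p i 1 * y p 1 := by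
    intro p i
    have h := congrFun (hdyn p) i
    simpa [Matrix.mulVec, dotProduct, Fin.sum_univ_two] using h
  have hdyn0 : ∀ p, y (p + 1) 0 = y p 0 + B p 0 1 * d p := by
    intro p
    have h := hcomp p 0
    have hr := hrow p 0
    simp only [hd]
    linear_combination h + (y p 0) * hr
  have hdyn1 : ∀ p, y (p + 1) 1 = y p 1 - B p 1 0 * d p := by
    intro p
    have h := hcomp p 1
    have hr := hrow p 1
    simp only [hd]
    linear_combination h + (y p 1) * hr
  have hdrec : ∀ p, d (p + 1) = (1 - B p 0 1 - B p 1 0) * d p := by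
    intro p
    have h0 := hdyn0 p
    have h1 := hdyn1 p
    simp only [hd] at *
    linear_combination h1 - h0
  -- factor bound
  have hfac : ∀ p, 0 ≤ 1 - ε * B p 0 1 := by
    intro p
    have h1 := hB_nonneg p 0 1
    have h2 := hB01le p
    nlinarith
  have habs : ∀ p, |1 - B p 0 1 - B p 1 0| ≤ 1 - ε * B p 0 1 := by
    intro p
    have h01 := hB_nonneg p 0 1
    have h10 := hB_nonneg p 1 0
    have h01' := hB01le p
    have h10' := hB10le p
    rcases le_or_gt 0 (1 - B p 0 1 - B p 1 0) with h | h
    · rw [abs_of_nonneg h]; nlinarith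
    · rw [abs_of_neg h]; nlinarith
  have hcontr : ∀ p, |d (p + 1)| ≤ (1 - ε * B p 0 1) * |d p| := by
    intro p
    rw [hdrec p, abs_mul]
    exact mul_le_mul_of_nonneg_right (habs p) (abs_nonneg _)
  set P : ℕ → ℝ := fun p => ∏ r ∈ Finset.range p, (1 - ε * B r 0 1) with hP
  have hPnn : ∀ p, 0 ≤ P p := fun p =>
    Finset.prod_nonneg fun r _ => hfac r
  have hPd : ∀ p, |d p| ≤ |d 0| * P p := by
    intro p
    induction p with
    | zero => simp [hP]
    | succ n ih =>
        calc |d (n + 1)| ≤ (1 - ε * B n 0 1) * |d n| := hcontr n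
          _ ≤ (1 - ε * B n 0 1) * (|d 0| * P n) :=
              mul_le_mul_of_nonneg_left ih (hfac n)
          _ = |d 0| * P (n + 1) := by
              simp only [hP, Finset.prod_range_succ]; ring
  set g : ℕ → ℝ := fun q => ε * B q 0 1 * P q with hg
  have hgnn : ∀ q, 0 ≤ g q := fun q =>
    mul_nonneg (mul_nonneg hε.le (hB_nonneg q 0 1)) (hPnn q)
  have hgtel : ∀ q, g q = P q - P (q + 1) := by
    intro q
    simp only [hg, hP, Finset.prod_range_succ]; ring
  have hgsum : Summable g := by
    apply summable_of_sum_range_le (c := 1) hgnn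
    intro n
    have : ∑ q ∈ Finset.range n, g q = P 0 - P n := by
      induction n with
      | zero => simp
      | succ m ih =>
          rw [Finset.sum_range_succ, ih, hgtel m]; ring
    rw [this]
    have := hPnn n
    simp only [hP, Finset.range_zero, Finset.prod_empty]
    linarith
  -- summability of the increment series
  have key : ∀ (c : ℝ), 0 ≤ c → (∀ q, |c * (B q 0 1 * d q)| ≤ (c * |d 0| / ε) * g q) := by
    intro c hc q
    have h1 : |c * (B q 0 1 * d q)| = c * B q 0 1 * |d q| := by
      rw [abs_mul, abs_mul, abs_of_nonneg hc, abs_of_nonneg (hB_nonneg q 0 1)]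
      ring
    rw [h1]
    have h2 : c * B q 0 1 * |d q| ≤ c * B q 0 1 * (|d 0| * P q) :=
      mul_le_mul_of_nonneg_left (hPd q) (mul_nonneg hc (hB_nonneg q 0 1))
    have h3 : (c * |d 0| / ε) * g q = c * B q 0 1 * (|d 0| * P q) := by
      simp only [hg]
      field_simp
    linarith
  have hsum0 : Summable (fun q => B q 0 1 * d q) := by
    rw [← summable_abs_iff]
    apply Summable.of_nonneg_of_le (fun q => abs_nonneg _)
      (fun q => by simpa using key 1 zero_le_one q)
    exact (hgsum.mul_left _)
  have hsum1 : Summable (fun q => B q 1 0 * d q) := by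
    rw [← summable_abs_iff]
    apply Summable.of_nonneg_of_le (fun q => abs_nonneg _)
      (fun q => ?_) (hgsum.mul_left (K' * |d 0| / ε))
    have hb := (hB_cut q).2
    have h1 : |B q 1 0 * d q| = B q 1 0 * |d q| := by
      rw [abs_mul, abs_of_nonneg (hB_nonneg q 1 0)]
    have h2 : B q 1 0 * |d q| ≤ K' * B q 0 1 * |d q| :=
      mul_le_mul_of_nonneg_right hb (abs_nonneg _)
    have h3 := key K' (by linarith) q
    have h4 : |K' * (B q 0 1 * d q)| = K' * B q 0 1 * |d q| := by
      rw [abs_mul, abs_mul, abs_of_nonneg (by linarith : (0:ℝ) ≤ K'),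
        abs_of_nonneg (hB_nonneg q 0 1)]
      ring
    rw [h1]
    calc B q 1 0 * |d q| ≤ K' * B q 0 1 * |d q| := h2
      _ = |K' * (B q 0 1 * d q)| := h4.symm
      _ ≤ K' * |d 0| / ε * g q := h3
  -- telescoping formulas
  have hform0 : ∀ p, y p 0 = y 0 0 + ∑ q ∈ Finset.range p, B q 0 1 * d q := by
    intro p
    induction p with
    | zero => simp
    | succ n ih => rw [Finset.sum_range_succ, hdyn0 n, ih]; ring
  have hform1 : ∀ p, y p 1 = y 0 1 - ∑ q ∈ Finset.range p, B q 1 0 * d q := by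
    intro p
    induction p with
    | zero => simp
    | succ n ih => rw [Finset.sum_range_succ, hdyn1 n, ih]; ring
  have T0 : Tendsto (fun p => y p 0) atTop (nhds (y 0 0 + ∑' q, B q 0 1 * d q)) := by
    have := (hsum0.hasSum.tendsto_sum_nat).const_add (y 0 0)
    exact this.congr fun p => (hform0 p).symm
  have T1 : Tendsto (fun p => y p 1) atTop (nhds (y 0 1 - ∑' q, B q 1 0 * d q)) := by
    exact (Tendsto.congr (fun p => (hform1 p).symm)
      ((tendsto_const_nhds (x := y 0 1)).sub hsum1.hasSum.tendsto_sum_nat))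
  refine ⟨_, _, T0, T1, ?_⟩
  intro hns
  have hS : Tendsto (fun p => ∑ q ∈ Finset.range p, B q 0 1) atTop atTop :=
    (not_summable_iff_tendsto_nat_atTop_of_nonneg (fun q => hB_nonneg q 0 1)).mp hns
  have hPexp : ∀ p, P p ≤ Real.exp (-(ε * ∑ q ∈ Finset.range p, B q 0 1)) := by
    intro p
    induction p with
    | zero => simp [hP]
    | succ n ih =>
        have hstep : 1 - ε * B n 0 1 ≤ Real.exp (-(ε * B n 0 1)) := by
          have := Real.add_one_le_exp (-(ε * B n 0 1)); linarith
        calc P (n + 1) = P n * (1 - ε * B n 0 1) := by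
              simp [hP, Finset.prod_range_succ]
          _ ≤ Real.exp (-(ε * ∑ q ∈ Finset.range n, B q 0 1)) * Real.exp (-(ε * B n 0 1)) :=
              mul_le_mul ih hstep (hfac n) (Real.exp_nonneg _)
          _ = Real.exp (-(ε * ∑ q ∈ Finset.range (n + 1), B q 0 1)) := by
              rw [← Real.exp_add]
              congr 1
              rw [Finset.sum_range_succ]
              ring
  have hexp0 : Tendsto (fun p => Real.exp (-(ε * ∑ q ∈ Finset.range p, B q 0 1)))
      atTop (nhds 0) := by
    apply Real.tendsto_exp_atBot.comp
    apply tendsto_neg_atBot_iff.mpr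
    exact Tendsto.const_mul_atTop hε hS
  have hP0 : Tendsto P atTop (nhds 0) := squeeze_zero hPnn hPexp hexp0
  have hd0 : Tendsto d atTop (nhds 0) := by
    have hmul : Tendsto (fun p => |d 0| * P p) atTop (nhds 0) := by
      simpa using hP0.const_mul (|d 0|)
    apply squeeze_zero_norm (fun p => ?_) hmul
    simpa [Real.norm_eq_abs] using hPd p
  have hdlim : Tendsto d atTop
      (nhds ((y 0 1 - ∑' q, B q 1 0 * d q) - (y 0 0 + ∑' q, B q 0 1 * d q))) := T1.sub T0
  have := tendsto_nhds_unique hd0 hdlim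
  linarith
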